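/- arXiv:1307.1120 — 2 statements merged into one kernel-verified Lean document; each statement's English description precedes it below -/
import Mathlib

section
/- The triple (G,E,φ) is pseudo-free if and only if the inverse semigroup S_{G,E} is E*-unitary (i.e., every element dominating a nonzero idempotent is itself idempotent). -/
noncomputable section

open scoped Classical

/-! ### Corona groups -/

section CoronaSec

variable (G : Type*) [Group G]

def eventuallyTrivial : Subgroup (ℕ → G) where
  carrier := {f | ∃ N, ∀ n, N ≤ n → f n = 1}
  one_mem' := ⟨0, fun n _ => rfl⟩
  mul_mem' := by
    rintro a b ⟨N, hN⟩ ⟨M, hM⟩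
    exact ⟨max N M, fun n hn => by
      simp [Pi.mul_apply, hN n (le_trans (le_max_left _ _) hn),
        hM n (le_trans (le_max_right _ _) hn)]⟩
  inv_mem' := by
    rintro a ⟨N, hN⟩
    exact ⟨N, fun n hn => by simp [Pi.inv_apply, hN n hn]⟩

instance eventuallyTrivial_normal : (eventuallyTrivial G).Normal := by
  constructor
  rintro a ⟨N, hN⟩ g
  exact ⟨N, fun n hn => by simp [Pi.mul_apply, Pi.inv_apply, hN n hn]⟩

def lshift : (ℕ → G) →* (ℕ → G) where
  toFun f := fun n => f (n + 1)
  map_one' := rfl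
  map_mul' a b := rfl

def rshift : (ℕ → G) →* (ℕ → G) where
  toFun f := fun n => if n = 0 then 1 else f (n - 1)
  map_one' := by funext n; by_cases h : n = 0 <;> simp [h]
  map_mul' a b := by funext n; by_cases h : n = 0 <;> simp [h]

lemma lshift_comap : eventuallyTrivial G ≤ (eventuallyTrivial G).comap (lshift G) := by
  rintro f ⟨N, hN⟩
  exact ⟨N, fun n hn => hN (n + 1) (by omega)⟩

lemma rshift_comap : eventuallyTrivial G ≤ (eventuallyTrivial G).comap (rshift G) := by
  rintro f ⟨N, hN⟩
  refine ⟨N + 1, fun n hn => ?_⟩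
  show (if n = 0 then 1 else f (n - 1)) = 1
  rw [if_neg (by omega)]
  exact hN (n - 1) (by omega)

abbrev Corona : Type _ := (ℕ → G) ⧸ eventuallyTrivial G

def coronaRho : Corona G →* Corona G :=
  QuotientGroup.map _ _ (rshift G) (rshift_comap G)

def coronaLam : Corona G →* Corona G :=
  QuotientGroup.map _ _ (lshift G) (lshift_comap G)

def coronaRhoZ : ℤ → Corona G → Corona G
  | Int.ofNat n => (⇑(coronaRho G))^[n]
  | Int.negSucc n => (⇑(coronaLam G))^[n + 1]

end CoronaSec

/-! ### Graphs, paths and self-similar actions -/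

structure SSGraph (V : Type*) (E : Type*) where
  r : E → V
  d : E → V

namespace SSGraph

variable {V E : Type*}

abbrev Pth (V E : Type*) := V × List E

def IsPath (Γ : SSGraph V E) (p : Pth V E) : Prop :=
  (∀ e ∈ p.2.head?, Γ.r e = p.1) ∧ p.2.Chain' fun a b => Γ.d a = Γ.r b

def src (Γ : SSGraph V E) (p : Pth V E) : V :=
  match p.2.getLast? with
  | none => p.1
  | some e => Γ.d e

def comp (p q : Pth V E) : Pth V E := (p.1, p.2 ++ q.2)

def ofVertex (v : V) : Pth V E := (v, [])

def ofEdge (Γ : SSGraph V E) (e : E) : Pth V E := (Γ.r e, [e])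

structure GraphAction (G : Type*) [Group G] (Γ : SSGraph V E) where
  actV : G → V → V
  actE : G → E → E
  actV_one : ∀ v, actV 1 v = v
  actV_mul : ∀ g h v, actV (g * h) v = actV g (actV h v)
  actE_one : ∀ e, actE 1 e = e
  actE_mul : ∀ g h e, actE (g * h) e = actE g (actE h e)
  r_act : ∀ g e, Γ.r (actE g e) = actV g (Γ.r e)
  d_act : ∀ g e, Γ.d (actE g e) = actV g (Γ.d e)

structure EdgeCocycle {G : Type*} [Group G] {Γ : SSGraph V E} (GA : GraphAction G Γ) where
  φ : G → E → G
  cocycle : ∀ g h e, φ (g * h) e = φ g (GA.actE h e) * φ h e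
  vertex_compat : ∀ g e v, GA.actV (φ g e) v = GA.actV g v

/-- The extension of a self-similar `(G,E,φ)`-datum to the set of all finite paths,
with all the properties listed in the extension proposition. -/
structure PathSystem {G : Type*} [Group G] {Γ : SSGraph V E} {GA : GraphAction G Γ}
    (c : EdgeCocycle GA) where
  act : G → Pth V E → Pth V E
  coc : G → Pth V E → G
  act_vertex : ∀ g v, act g (ofVertex v) = ofVertex (GA.actV g v)
  act_edge : ∀ g e, act g (Γ.ofEdge e) = Γ.ofEdge (GA.actE g e)
  coc_vertex : ∀ g v, coc g (ofVertex v) = g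
  coc_edge : ∀ g e, coc g (Γ.ofEdge e) = c.φ g e
  isPath_act : ∀ g p, Γ.IsPath p → Γ.IsPath (act g p)
  length_act : ∀ g p, Γ.IsPath p → (act g p).2.length = p.2.length
  ran_act : ∀ g p, Γ.IsPath p → (act g p).1 = GA.actV g p.1
  src_act : ∀ g p, Γ.IsPath p → Γ.src (act g p) = GA.actV g (Γ.src p)
  coc_vertex_act : ∀ g p v, Γ.IsPath p → GA.actV (coc g p) v = GA.actV g v
  act_one : ∀ p, Γ.IsPath p → act 1 p = p
  act_mul : ∀ g h p, Γ.IsPath p → act (g * h) p = act g (act h p)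
  coc_mul : ∀ g h p, Γ.IsPath p → coc (g * h) p = coc g (act h p) * coc h p
  act_comp : ∀ g p q, Γ.IsPath p → Γ.IsPath q → Γ.src p = q.1 →
    act g (comp p q) = comp (act g p) (act (coc g p) q)
  coc_comp : ∀ g p q, Γ.IsPath p → Γ.IsPath q → Γ.src p = q.1 →
    coc g (comp p q) = coc (coc g p) q

def PseudoFree {G : Type*} [Group G] {Γ : SSGraph V E} (GA : GraphAction G Γ)
    (c : EdgeCocycle GA) : Prop :=
  ∀ g e, GA.actE g e = e → c.φ g e = 1 → g = 1

/-! ### The inverse semigroup `S_{G,E}` -/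

def SgeCond {G : Type*} [Group G] (Γ : SSGraph V E) (GA : GraphAction G Γ)
    (t : Pth V E × G × Pth V E) : Prop :=
  Γ.IsPath t.1 ∧ Γ.IsPath t.2.2 ∧ Γ.src t.1 = GA.actV t.2.1 (Γ.src t.2.2)

def sgeSet {G : Type*} [Group G] (Γ : SSGraph V E) (GA : GraphAction G Γ) :
    Set (Option (Pth V E × G × Pth V E)) :=
  {x | x = none ∨ ∃ t, x = some t ∧ SgeCond Γ GA t}

def sgeMulAux {G : Type*} [Group G] {Γ : SSGraph V E} {GA : GraphAction G Γ}
    {c : EdgeCocycle GA} (S : PathSystem c) :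
    Pth V E × G × Pth V E → Pth V E × G × Pth V E → Option (Pth V E × G × Pth V E) :=
  fun x y =>
    if x.2.2.1 = y.1.1 ∧ x.2.2.2 <+: y.1.2 then
      let ε : Pth V E := (Γ.src x.2.2, y.1.2.drop x.2.2.2.length)
      some (comp x.1 (S.act x.2.1 ε), S.coc x.2.1 ε * y.2.1, y.2.2)
    else if y.1.1 = x.2.2.1 ∧ y.1.2 <+: x.2.2.2 then
      let ε : Pth V E := (Γ.src y.1, x.2.2.2.drop y.1.2.length)
      some (x.1, x.2.1 * (S.coc y.2.1⁻¹ ε)⁻¹, comp y.2.2 (S.act y.2.1⁻¹ ε))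
    else none

def sgeMul {G : Type*} [Group G] {Γ : SSGraph V E} {GA : GraphAction G Γ}
    {c : EdgeCocycle GA} (S : PathSystem c) :
    Option (Pth V E × G × Pth V E) → Option (Pth V E × G × Pth V E) →
      Option (Pth V E × G × Pth V E)
  | some x, some y => sgeMulAux S x y
  | _, _ => none

def sgeStar {G : Type*} [Group G] :
    Option (Pth V E × G × Pth V E) → Option (Pth V E × G × Pth V E)
  | none => none
  | some t => some (t.2.2, t.2.1⁻¹, t.1)

/-! ### Infinite paths -/

def InfPath (Γ : SSGraph V E) (ξ : ℕ → E) : Prop :=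
  ∀ n, Γ.d (ξ n) = Γ.r (ξ (n + 1))

/-- Truncation of an infinite path: the finite path formed by its first `n` edges.
(Index `n` of the sequence is the `(n+1)`-st edge of the path.) -/
def trunc (Γ : SSGraph V E) (ξ : ℕ → E) (n : ℕ) : Pth V E :=
  (Γ.r (ξ 0), (List.range n).map ξ)

/-- Concatenation `αξ` of a finite path with an infinite path. -/
def compInf (α : Pth V E) (ξ : ℕ → E) : ℕ → E :=
  fun n => α.2.getD n (ξ (n - α.2.length))

/-- `Phi S g ξ n = φ(g, ξ|_n)`, i.e. the entry of the sequence `Φ(g,ξ) ∈ G^∞` at the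
`(n+1)`-st position in the 1-based indexing of the paper. -/
def Phi {G : Type*} [Group G] {Γ : SSGraph V E} {GA : GraphAction G Γ}
    {c : EdgeCocycle GA} (S : PathSystem c) (g : G) (ξ : ℕ → E) : ℕ → G :=
  fun n => S.coc g (Γ.trunc ξ n)

/-- The extension of the self-similar action to infinite paths. -/
structure InfAction {G : Type*} [Group G] {Γ : SSGraph V E} {GA : GraphAction G Γ}
    {c : EdgeCocycle GA} (S : PathSystem c) where
  a : G → (ℕ → E) → (ℕ → E)
  isInf : ∀ g ξ, Γ.InfPath ξ → Γ.InfPath (a g ξ)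
  a_one : ∀ ξ, Γ.InfPath ξ → a 1 ξ = ξ
  a_mul : ∀ g h ξ, Γ.InfPath ξ → a (g * h) ξ = a g (a h ξ)
  trunc_a : ∀ g ξ n, Γ.InfPath ξ → Γ.trunc (a g ξ) n = S.act g (Γ.trunc ξ n)

/-- `η` belongs to the cylinder `Z(β)`. -/
def InCyl (Γ : SSGraph V E) (β : Pth V E) (η : ℕ → E) : Prop :=
  Γ.r (η 0) = β.1 ∧ ∀ n (hn : n < β.2.length), η n = β.2[n]'hn

/-- Equality of germs `[α₁,g₁,β₁; η₁] = [α₂,g₂,β₂; η₂]` for the action of `S_{G,E}`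
on the infinite path space. -/
def germEqv {G : Type*} [Group G] {Γ : SSGraph V E} {GA : GraphAction G Γ}
    {c : EdgeCocycle GA} (S : PathSystem c)
    (α₁ : Pth V E) (g₁ : G) (β₁ : Pth V E) (η₁ : ℕ → E)
    (α₂ : Pth V E) (g₂ : G) (β₂ : Pth V E) (η₂ : ℕ → E) : Prop :=
  η₁ = η₂ ∧ ∃ δ : Pth V E, Γ.IsPath δ ∧ Γ.InCyl δ η₁ ∧
    sgeMul S (some (α₁, g₁, β₁)) (some (δ, 1, δ)) =
      sgeMul S (some (α₂, g₂, β₂)) (some (δ, 1, δ))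

/-- The partial isometry `s_α` associated to a finite path. -/
def sPath {A : Type*} [Monoid A] (pv : V → A) (se : E → A) : Pth V E → A :=
  fun x =>
    match x with
    | (v, []) => pv v
    | (_, es) => (es.map se).prod

end SSGraph

end

noncomputable section Helpers

open SSGraph

variable {V E G : Type*} [Group G] {Γ : SSGraph V E} {GA : SSGraph.GraphAction G Γ}
  {c : SSGraph.EdgeCocycle GA} (S : PathSystem c)

lemma src_pair_nil (v : V) : Γ.src ((v, []) : Pth V E) = v := rfl

lemma src_ofEdge (e : E) : Γ.src (Γ.ofEdge e) = Γ.d e := rfl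

lemma isPath_pair_nil (v : V) : Γ.IsPath ((v, []) : Pth V E) :=
  ⟨fun _ h => by simp at h, List.isChain_nil⟩

lemma isPath_ofEdge (e : E) : Γ.IsPath (Γ.ofEdge e) :=
  ⟨fun e' h => by simp [SSGraph.ofEdge] at h ⊢; rw [h], List.isChain_singleton e⟩

lemma coc_one' {p : Pth V E} (hp : Γ.IsPath p) : S.coc 1 p = 1 := by
  have h := S.coc_mul 1 1 p hp
  rw [one_mul, S.act_one p hp] at h
  exact mul_eq_right.mp h.symm

lemma isPath_src_drop {p q : Pth V E} (hp : Γ.IsPath p) (h1 : q.1 = p.1)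
    (h2 : q.2 <+: p.2) : Γ.IsPath (Γ.src q, p.2.drop q.2.length) := by
  obtain ⟨t, ht⟩ := h2
  have hd : p.2.drop q.2.length = t := by rw [← ht, List.drop_left]
  rw [hd]
  have hch : (q.2 ++ t).Chain' (fun a b => Γ.d a = Γ.r b) := by rw [ht]; exact hp.2
  rw [List.Chain', List.isChain_append] at hch
  obtain ⟨hc1, hc2, hc3⟩ := hch
  refine ⟨?_, hc2⟩
  intro e' he'
  rcases List.eq_nil_or_concat q.2 with hq | ⟨as, a, hq⟩
  · have hsrc : Γ.src q = p.1 := by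
      rw [← h1]; unfold SSGraph.src; rw [hq]; rfl
    rw [hsrc]
    apply hp.1
    rw [← ht, hq, List.nil_append]
    exact he'
  · have hsrc : Γ.src q = Γ.d a := by
      unfold SSGraph.src; rw [hq]; simp
    rw [hsrc]
    exact (hc3 a (by simp [hq]) e' he').symm

lemma rigid (hpf : PseudoFree GA c) :
    ∀ (l : List E) (v : V) (g : G), Γ.IsPath (v, l) →
      (S.act g (v, l)).2 = l → S.coc g (v, l) = 1 → g = 1 := by
  intro l
  induction l with
  | nil =>
    intro v g _ _ hc
    rwa [show ((v, []) : Pth V E) = SSGraph.ofVertex v from rfl, S.coc_vertex] at hc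
  | cons e t ih =>
    intro v g hp ha hc
    have hre : Γ.r e = v := hp.1 e rfl
    have hch := hp.2
    rw [List.Chain', List.isChain_cons] at hch
    have hpe : Γ.IsPath (Γ.ofEdge e) := isPath_ofEdge e
    have hpt : Γ.IsPath ((Γ.d e, t) : Pth V E) := by
      refine ⟨?_, hch.2⟩
      intro e' he'
      exact (hch.1 e' he').symm
    have hcomp : ((v, e :: t) : Pth V E) = SSGraph.comp (Γ.ofEdge e) (Γ.d e, t) := by
      simp [SSGraph.comp, SSGraph.ofEdge, hre]
    have hsrc : Γ.src (Γ.ofEdge e) = ((Γ.d e, t) : Pth V E).1 := rfl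
    rw [hcomp, S.act_comp g _ _ hpe hpt hsrc, S.act_edge, S.coc_edge] at ha
    rw [hcomp, S.coc_comp g _ _ hpe hpt hsrc, S.coc_edge] at hc
    have ha' : GA.actE g e :: (S.act (c.φ g e) (Γ.d e, t)).2 = e :: t := ha
    have hEe : GA.actE g e = e := (List.cons.injEq _ _ _ _ ▸ ha').1
    have ha2 : (S.act (c.φ g e) (Γ.d e, t)).2 = t := (List.cons.injEq _ _ _ _ ▸ ha').2
    have hφ : c.φ g e = 1 := ih (Γ.d e) (c.φ g e) hpt ha2 hc
    exact hpf g e hEe hφ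

lemma idem_self {δ : Pth V E} (hδ : Γ.IsPath δ) :
    sgeMul S (some (δ, (1 : G), δ)) (some (δ, 1, δ)) = some (δ, 1, δ) := by
  show sgeMulAux S _ _ = _
  unfold sgeMulAux
  rw [if_pos ⟨rfl, List.prefix_rfl⟩]
  have hε : ((Γ.src δ, δ.2.drop δ.2.length) : Pth V E) = SSGraph.ofVertex (Γ.src δ) := by
    rw [List.drop_length]; rfl
  show some (SSGraph.comp δ (S.act 1 (Γ.src δ, δ.2.drop δ.2.length)),
      S.coc 1 (Γ.src δ, δ.2.drop δ.2.length) * 1, δ) = some (δ, 1, δ)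
  rw [hε, S.act_vertex, S.coc_vertex, GA.actV_one]
  simp [SSGraph.comp, SSGraph.ofVertex]

end Helpers

open SSGraph in
theorem pseudoFree_iff_eStarUnitary {V E G : Type*} [Group G] [Countable G] [Fintype V] [Fintype E]
    (Γ : SSGraph V E) (hns : ∀ v : V, ∃ e, Γ.r e = v)
    (GA : SSGraph.GraphAction G Γ) (c : SSGraph.EdgeCocycle GA)
    (S : PathSystem c) :
    PseudoFree GA c ↔
      ∀ s ∈ sgeSet Γ GA, ∀ f ∈ sgeSet Γ GA, f ≠ none →
        sgeMul S f f = f → sgeMul S s f = f → sgeMul S s s = s := by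
  constructor
  · -- pseudo-free ⇒ E*-unitary
    intro hpf s hs f hf hfne hff hsf
    -- s cannot be none
    rcases s with _ | ⟨α, g, β⟩
    · exfalso; apply hfne; rw [← hsf]; cases f <;> rfl
    -- f is some triple satisfying SgeCond
    rcases hf with hf0 | ⟨⟨a, h, b⟩, rfl, hfa, hfb, hfs⟩
    · exact absurd hf0 hfne
    rcases hs with hs0 | ⟨t, hts, hta, htb, htg⟩
    · exact absurd hs0 (by simp)
    obtain rfl : t = (α, g, β) := by injection hts.symm
    -- Step 1: f = (δ, 1, δ)
    have hff' : sgeMulAux S (a, h, b) (a, h, b) = some (a, h, b) := hff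
    unfold sgeMulAux at hff'
    have hstep : a = b ∧ h = 1 := by
      split_ifs at hff' with h1 h2
      · obtain ⟨h11, t0, ht0⟩ := h1
        have hd0 : a.2.drop b.2.length = t0 := by rw [← ht0, List.drop_left]
        have hεp : Γ.IsPath ((Γ.src b, a.2.drop b.2.length) : Pth V E) :=
          isPath_src_drop hfa h11 ⟨t0, ht0⟩
        have hff'' : some (SSGraph.comp a (S.act h (Γ.src b, a.2.drop b.2.length)),
            S.coc h (Γ.src b, a.2.drop b.2.length) * h, b) = some (a, h, b) := hff'
        have hXY := Option.some.inj hff''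
        have e1 : SSGraph.comp a (S.act h (Γ.src b, a.2.drop b.2.length)) = a :=
          congrArg Prod.fst hXY
        have e2 : S.coc h (Γ.src b, a.2.drop b.2.length) * h = h :=
          congrArg (fun z => z.2.1) hXY
        have e1' : a.2 ++ (S.act h (Γ.src b, a.2.drop b.2.length)).2 = a.2 :=
          congrArg Prod.snd e1
        have hnil : (S.act h (Γ.src b, a.2.drop b.2.length)).2 = [] :=
          List.append_cancel_left (by rw [List.append_nil]; exact e1')
        have hlen := S.length_act h _ hεp
        rw [hnil] at hlen
        have hdnil : a.2.drop b.2.length = [] := List.eq_nil_of_length_eq_zero hlen.symm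
        have ht0nil : t0 = [] := hd0 ▸ hdnil
        have hab2 : a.2 = b.2 := by rw [← ht0, ht0nil, List.append_nil]
        have hab : a = b := Prod.ext h11.symm hab2
        have hε : ((Γ.src b, a.2.drop b.2.length) : Pth V E) = SSGraph.ofVertex (Γ.src b) := by
          rw [hdnil]; rfl
        rw [hε, S.coc_vertex] at e2
        exact ⟨hab, mul_eq_right.mp e2⟩
      · obtain ⟨h21, t0, ht0⟩ := h2
        exfalso
        have hd0 : b.2.drop a.2.length = t0 := by rw [← ht0, List.drop_left]
        have hεp : Γ.IsPath ((Γ.src a, b.2.drop a.2.length) : Pth V E) :=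
          isPath_src_drop hfb h21 ⟨t0, ht0⟩
        have hff'' : some (a, h * (S.coc h⁻¹ (Γ.src a, b.2.drop a.2.length))⁻¹,
            SSGraph.comp b (S.act h⁻¹ (Γ.src a, b.2.drop a.2.length))) = some (a, h, b) := hff'
        have hXY := Option.some.inj hff''
        have e3 : SSGraph.comp b (S.act h⁻¹ (Γ.src a, b.2.drop a.2.length)) = b :=
          congrArg (fun z => z.2.2) hXY
        have e3' : b.2 ++ (S.act h⁻¹ (Γ.src a, b.2.drop a.2.length)).2 = b.2 :=
          congrArg Prod.snd e3
        have hnil : (S.act h⁻¹ (Γ.src a, b.2.drop a.2.length)).2 = [] :=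
          List.append_cancel_left (by rw [List.append_nil]; exact e3')
        have hlen := S.length_act h⁻¹ _ hεp
        rw [hnil] at hlen
        have hdnil : b.2.drop a.2.length = [] := List.eq_nil_of_length_eq_zero hlen.symm
        have ht0nil : t0 = [] := hd0 ▸ hdnil
        have hab2 : a.2 = b.2 := by rw [← ht0, ht0nil, List.append_nil]
        exact h1 ⟨h21.symm, hab2 ▸ List.prefix_rfl⟩
    obtain ⟨rfl, rfl⟩ := hstep
    -- Step 2: analyse s ⬝ f = f
    have hsf' : sgeMulAux S (α, g, β) (a, 1, a) = some (a, 1, a) := hsf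
    unfold sgeMulAux at hsf'
    have hgoal : α = β ∧ g = 1 := by
      split_ifs at hsf' with h1 h2
      · obtain ⟨h11, t0, ht0⟩ := h1
        have hd0 : a.2.drop β.2.length = t0 := by rw [← ht0, List.drop_left]
        have hεp : Γ.IsPath ((Γ.src β, a.2.drop β.2.length) : Pth V E) :=
          isPath_src_drop hfa h11 ⟨t0, ht0⟩
        have hsf'' : some (SSGraph.comp α (S.act g (Γ.src β, a.2.drop β.2.length)),
            S.coc g (Γ.src β, a.2.drop β.2.length) * 1, a) = some (a, 1, a) := hsf'
        have hXY := Option.some.inj hsf''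
        have e1 : SSGraph.comp α (S.act g (Γ.src β, a.2.drop β.2.length)) = a :=
          congrArg Prod.fst hXY
        have e2 : S.coc g (Γ.src β, a.2.drop β.2.length) * 1 = 1 :=
          congrArg (fun z => z.2.1) hXY
        rw [mul_one] at e2
        have e1a : α.1 = a.1 := by
          have := congrArg Prod.fst e1; exact this
        have e1' : α.2 ++ (S.act g (Γ.src β, a.2.drop β.2.length)).2 = a.2 :=
          congrArg Prod.snd e1
        have hlen := S.length_act g _ hεp
        have hlen2 : a.2.length = α.2.length + t0.length := by
          rw [← e1', List.length_append, hlen, hd0]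
        have hlen3 : a.2.length = β.2.length + t0.length := by
          rw [← ht0, List.length_append]
        have hlenαβ : α.2.length = β.2.length := by omega
        have hαpre : α.2 <+: a.2 := ⟨_, e1'⟩
        have hβpre : β.2 <+: a.2 := ⟨t0, ht0⟩
        have hαβ2 : α.2 = β.2 :=
          List.IsPrefix.eq_of_length
            (List.prefix_of_prefix_length_le hαpre hβpre (le_of_eq hlenαβ)) hlenαβ
        have hαβ : α = β := Prod.ext (by rw [e1a, ← h11]) hαβ2
        -- the action of g fixes the edge list of ε
        have hact2 : (S.act g (Γ.src β, a.2.drop β.2.length)).2 = a.2.drop β.2.length := by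
          refine List.append_cancel_left (as := β.2) ?_
          calc β.2 ++ (S.act g (Γ.src β, a.2.drop β.2.length)).2 = a.2 := by
                have t := e1'; rw [hαβ2] at t; exact t
            _ = β.2 ++ a.2.drop β.2.length := by rw [hd0]; exact ht0.symm
        have hg : g = 1 := by
          have := rigid S hpf (a.2.drop β.2.length) (Γ.src β) g hεp ?_ e2
          · exact this
          · exact hact2
        exact ⟨hαβ, hg⟩
      · obtain ⟨h21, t0, ht0⟩ := h2
        have hd0 : β.2.drop a.2.length = t0 := by rw [← ht0, List.drop_left]
        have hεp : Γ.IsPath ((Γ.src a, β.2.drop a.2.length) : Pth V E) :=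
          isPath_src_drop htb h21 ⟨t0, ht0⟩
        have hsf'' : some (α, g * (S.coc (1:G)⁻¹ (Γ.src a, β.2.drop a.2.length))⁻¹,
            SSGraph.comp a (S.act (1:G)⁻¹ (Γ.src a, β.2.drop a.2.length))) = some (a, 1, a) := hsf'
        rw [inv_one, coc_one' S hεp, S.act_one _ hεp, inv_one, mul_one] at hsf''
        have hXY := Option.some.inj hsf''
        have e1 : α = a := congrArg Prod.fst hXY
        have e2 : g = 1 := congrArg (fun z => z.2.1) hXY
        have e3 : SSGraph.comp a (Γ.src a, β.2.drop a.2.length) = a :=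
          congrArg (fun z => z.2.2) hXY
        have e3' : a.2 ++ β.2.drop a.2.length = a.2 := congrArg Prod.snd e3
        have hdnil : β.2.drop a.2.length = [] :=
          List.append_cancel_left (by rw [List.append_nil]; exact e3')
        have ht0nil : t0 = [] := hd0 ▸ hdnil
        have hab2 : a.2 = β.2 := by rw [← ht0, ht0nil, List.append_nil]
        have hβa : β = a := Prod.ext h21.symm hab2.symm
        exact ⟨by rw [e1, ← hβa], e2⟩
    obtain ⟨rfl, rfl⟩ := hgoal
    exact idem_self S hta
  · -- E*-unitary ⇒ pseudo-free
    intro hu g e hE hφ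
    have hrAct : Γ.r e = GA.actV g (Γ.r e) := by rw [← GA.r_act, hE]
    set s : Option (Pth V E × G × Pth V E) := some ((Γ.r e, []), g, (Γ.r e, [])) with hs_def
    set f : Option (Pth V E × G × Pth V E) := some (Γ.ofEdge e, (1:G), Γ.ofEdge e) with hf_def
    have hsmem : s ∈ sgeSet Γ GA := Or.inr ⟨_, rfl,
      isPath_pair_nil _, isPath_pair_nil _, hrAct⟩
    have hfmem : f ∈ sgeSet Γ GA := Or.inr ⟨_, rfl,
      isPath_ofEdge e, isPath_ofEdge e, (GA.actV_one _).symm⟩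
    have hεe : ((Γ.src (Γ.ofEdge e), [e].drop [e].length) : Pth V E)
        = SSGraph.ofVertex (Γ.d e) := rfl
    have hff : sgeMul S f f = f := by
      show sgeMulAux S _ _ = _
      unfold sgeMulAux
      rw [if_pos ⟨rfl, List.prefix_rfl⟩]
      show some (SSGraph.comp (Γ.ofEdge e)
          (S.act 1 (Γ.src (Γ.ofEdge e), [e].drop [e].length)),
        S.coc 1 (Γ.src (Γ.ofEdge e), [e].drop [e].length) * 1, Γ.ofEdge e) = _
      rw [hεe, S.act_vertex, S.coc_vertex, GA.actV_one]
      simp [hf_def, SSGraph.comp, SSGraph.ofVertex, SSGraph.ofEdge]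
    have hsf : sgeMul S s f = f := by
      show sgeMulAux S _ _ = _
      unfold sgeMulAux
      rw [if_pos ⟨rfl, List.nil_prefix⟩]
      show some (SSGraph.comp (Γ.r e, [])
          (S.act g (Γ.src ((Γ.r e, []) : Pth V E), [e].drop ([] : List E).length)),
        S.coc g (Γ.src ((Γ.r e, []) : Pth V E), [e].drop ([] : List E).length) * 1,
        Γ.ofEdge e) = _
      have hε2 : ((Γ.src ((Γ.r e, []) : Pth V E), [e].drop ([] : List E).length) : Pth V E)
          = Γ.ofEdge e := rfl
      rw [hε2, S.act_edge, S.coc_edge, hE, hφ, mul_one]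
      simp [hf_def, SSGraph.comp, SSGraph.ofEdge]
    have hss := hu s hsmem f hfmem (by simp [hf_def]) hff hsf
    have hss' : sgeMulAux S ((Γ.r e, []), g, (Γ.r e, []))
        ((Γ.r e, []), g, (Γ.r e, [])) = some ((Γ.r e, []), g, (Γ.r e, [])) := hss
    unfold sgeMulAux at hss'
    rw [if_pos ⟨rfl, List.prefix_rfl⟩] at hss'
    have hss'' : some (SSGraph.comp (Γ.r e, [])
        (S.act g (Γ.src ((Γ.r e, []) : Pth V E), ([] : List E).drop ([] : List E).length)),
      S.coc g (Γ.src ((Γ.r e, []) : Pth V E), ([] : List E).drop ([] : List E).length) * g,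
      ((Γ.r e, []) : Pth V E)) = some ((Γ.r e, []), g, (Γ.r e, [])) := hss'
    have hεv : ((Γ.src ((Γ.r e, []) : Pth V E), ([] : List E).drop ([] : List E).length) : Pth V E)
        = SSGraph.ofVertex (Γ.r e) := rfl
    rw [hεv, S.coc_vertex] at hss''
    have e2 : g * g = g := congrArg (fun z => z.2.1) (Option.some.inj hss'')
    exact mul_eq_right.mp e2
end

section
/- Assume (G,E,φ) is pseudo-free. If [α₁,g₁,β₁; β₁ξ₁] = [α₂,g₂,β₂; β₂ξ₂] as germs, then ρ^{|α₁|}(Φ(g₁,ξ₁)) and ρ^{|α₂|}(Φ(g₂,ξ₂)) are congruent modulo the subgroup G^{(∞)} of eventually trivial sequences, and |α₁| − |β₁| = |α₂| − |β₂|; consequently the lag map ℓ([α,g,β; βξ]) = (ρ̌^{|α|}(Φ̌(g,ξ)), |α|−|β|) is a well-defined groupoid homomorphism from the tight groupoid of S_{G,E} to the semidirect product Ǧ ⋊_{ρ̌} ℤ. -/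
/-! ### Auxiliary lemmas -/

section AuxLemmas

open SSGraph

variable {V E G : Type*} [Group G]

lemma chain'_getElem {α : Type*} {R : α → α → Prop} {l : List α} :
    l.Chain' R ↔ ∀ (i : ℕ) (h : i + 1 < l.length), R l[i] l[i+1] := by
  exact List.isChain_iff_getElem

lemma rshift_iterate (a : ℕ) (f : ℕ → G) (n : ℕ) :
    (⇑(rshift G))^[a] f n = if n < a then 1 else f (n - a) := by
  induction a generalizing n with
  | zero => simp
  | succ a ih =>
    rw [Function.iterate_succ_apply']
    show (if n = 0 then 1 else ((⇑(rshift G))^[a] f) (n - 1)) = _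
    rcases eq_or_ne n 0 with h | h
    · simp [h]
    · rw [if_neg h, ih]
      by_cases h2 : n - 1 < a
      · rw [if_pos h2, if_pos (by omega)]
      · rw [if_neg h2, if_neg (by omega)]
        congr 1
        omega

lemma rshift_iterate_mul (a : ℕ) (x y : ℕ → G) :
    (⇑(rshift G))^[a] (x * y) = (⇑(rshift G))^[a] x * (⇑(rshift G))^[a] y := by
  funext n
  simp only [Pi.mul_apply, rshift_iterate]
  split_ifs with h
  · simp
  · rfl

lemma lshift_iterate (j : ℕ) (f : ℕ → G) (n : ℕ) :
    (⇑(lshift G))^[j] f n = f (n + j) := by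
  induction j generalizing f n with
  | zero => rfl
  | succ j ih =>
    rw [Function.iterate_succ_apply, ih]
    rfl

lemma lshift_rshift_iter {j n : ℕ} (h : j ≤ n) (f : ℕ → G) :
    (⇑(lshift G))^[j] ((⇑(rshift G))^[n] f) = (⇑(rshift G))^[n - j] f := by
  funext m
  rw [lshift_iterate, rshift_iterate, rshift_iterate]
  by_cases h' : m < n - j
  · rw [if_pos (by omega), if_pos h']
  · rw [if_neg (by omega), if_neg h']
    congr 1
    omega

lemma mk'_eq_iff (x y : ℕ → G) :
    QuotientGroup.mk' (eventuallyTrivial G) x = QuotientGroup.mk' (eventuallyTrivial G) y ↔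
      ∃ N, ∀ n, N ≤ n → x n = y n := by
  rw [QuotientGroup.mk'_eq_mk']
  constructor
  · rintro ⟨z, ⟨N, hN⟩, rfl⟩
    exact ⟨N, fun n hn => by simp [Pi.mul_apply, hN n hn]⟩
  · rintro ⟨N, hN⟩
    exact ⟨x⁻¹ * y, ⟨N, fun n hn => by simp [Pi.mul_apply, Pi.inv_apply, hN n hn]⟩,
      by group⟩

lemma coronaRho_iter (k : ℕ) (f : ℕ → G) :
    (⇑(coronaRho G))^[k] (QuotientGroup.mk' (eventuallyTrivial G) f) =
      QuotientGroup.mk' (eventuallyTrivial G) ((⇑(rshift G))^[k] f) := by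
  induction k generalizing f with
  | zero => rfl
  | succ k ih =>
    rw [Function.iterate_succ_apply, Function.iterate_succ_apply]
    rw [← ih (rshift G f)]
    rfl

lemma coronaLam_iter (k : ℕ) (f : ℕ → G) :
    (⇑(coronaLam G))^[k] (QuotientGroup.mk' (eventuallyTrivial G) f) =
      QuotientGroup.mk' (eventuallyTrivial G) ((⇑(lshift G))^[k] f) := by
  induction k generalizing f with
  | zero => rfl
  | succ k ih =>
    rw [Function.iterate_succ_apply, Function.iterate_succ_apply]
    rw [← ih (lshift G f)]
    rfl

lemma coronaRhoZ_shift (m n : ℕ) (f : ℕ → G) :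
    coronaRhoZ G ((m : ℤ) - n)
        (QuotientGroup.mk' (eventuallyTrivial G) ((⇑(rshift G))^[n] f)) =
      QuotientGroup.mk' (eventuallyTrivial G) ((⇑(rshift G))^[m] f) := by
  rcases le_or_gt n m with h | h
  · have he : (m : ℤ) - n = Int.ofNat (m - n) := by
      simp only [Int.ofNat_eq_coe]
      omega
    rw [he]
    show (⇑(coronaRho G))^[m - n] _ = _
    rw [coronaRho_iter, ← Function.iterate_add_apply]
    congr 2
    omega
  · have he : (m : ℤ) - n = Int.negSucc (n - m - 1) := by
      rw [Int.negSucc_eq]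
      have : ((n - m - 1 : ℕ) : ℤ) = (n : ℤ) - m - 1 := by omega
      rw [this]
      ring
    rw [he]
    show (⇑(coronaLam G))^[n - m - 1 + 1] _ = _
    rw [coronaLam_iter]
    have h2 : n - m - 1 + 1 = n - m := by omega
    rw [h2, lshift_rshift_iter (by omega)]
    congr 2
    omega

/-! ### Graph auxiliary lemmas -/

lemma isPath_iff (Γ : SSGraph V E) (v : V) (l : List E) :
    Γ.IsPath (v, l) ↔ (∀ _ : 0 < l.length, Γ.r (l[0]'(by omega)) = v) ∧
      ∀ (i : ℕ) (h : i + 1 < l.length), Γ.d (l[i]'(by omega)) = Γ.r (l[i+1]'h) := by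
  unfold SSGraph.IsPath
  rw [chain'_getElem]
  cases l with
  | nil => simp
  | cons a l => simp

lemma isPath_trunc (Γ : SSGraph V E) {ξ : ℕ → E} (hξ : Γ.InfPath ξ) (n : ℕ) :
    Γ.IsPath (Γ.trunc ξ n) := by
  rw [SSGraph.trunc, isPath_iff]
  constructor
  · intro h
    simp only [List.length_map, List.length_range] at h
    simp [List.getElem_map, List.getElem_range]
  · intro i h
    simp only [List.length_map, List.length_range] at h
    simp only [List.getElem_map, List.getElem_range]
    exact hξ i

lemma trunc_length (Γ : SSGraph V E) (ξ : ℕ → E) (n : ℕ) :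
    (Γ.trunc ξ n).2.length = n := by
  simp [SSGraph.trunc]

lemma infPath_shift (Γ : SSGraph V E) {ξ : ℕ → E} (hξ : Γ.InfPath ξ) (m : ℕ) :
    Γ.InfPath (fun i => ξ (m + i)) := by
  intro n
  exact hξ (m + n)

lemma src_trunc (Γ : SSGraph V E) {ξ : ℕ → E} (hξ : Γ.InfPath ξ) (m : ℕ) :
    Γ.src (Γ.trunc ξ m) = Γ.r (ξ m) := by
  cases m with
  | zero => rfl
  | succ m =>
    have hlast : ((List.range (m+1)).map ξ).getLast? = some (ξ m) := by
      rw [List.range_succ, List.map_append]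
      exact List.getLast?_concat
    show Γ.src (Γ.r (ξ 0), (List.range (m+1)).map ξ) = _
    unfold SSGraph.src
    rw [hlast]
    exact hξ m

lemma trunc_add (Γ : SSGraph V E) (ξ : ℕ → E) (m k : ℕ) :
    Γ.trunc ξ (m + k) = SSGraph.comp (Γ.trunc ξ m) (Γ.trunc (fun i => ξ (m + i)) k) := by
  unfold SSGraph.trunc SSGraph.comp
  refine Prod.ext rfl ?_
  show (List.range (m+k)).map ξ = (List.range m).map ξ ++ (List.range k).map _
  rw [List.range_add, List.map_append, List.map_map]
  rfl

lemma compInf_lt (β : Pth V E) (ξ : ℕ → E) {n : ℕ} (h : n < β.2.length) :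
    compInf β ξ n = β.2[n] := List.getD_eq_getElem _ _ h

lemma compInf_ge (β : Pth V E) (ξ : ℕ → E) {n : ℕ} (h : β.2.length ≤ n) :
    compInf β ξ n = ξ (n - β.2.length) := List.getD_eq_default _ _ h

lemma coc_one {Γ : SSGraph V E} {GA : GraphAction G Γ} {c : EdgeCocycle GA}
    (S : PathSystem c) {p : Pth V E} (hp : Γ.IsPath p) : S.coc 1 p = 1 := by
  have h := S.coc_mul 1 1 p hp
  rw [one_mul, S.act_one p hp] at h
  exact left_eq_mul.mp h

lemma isPath_drop {Γ : SSGraph V E} {β : Pth V E} (hβ : Γ.IsPath β) {δ : Pth V E} {d : ℕ}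
    (hd : d ≤ β.2.length) (h1 : δ.1 = β.1) (h2 : δ.2 = β.2.take d) :
    Γ.IsPath (Γ.src δ, β.2.drop d) := by
  have hβ' := (isPath_iff Γ β.1 β.2).mp hβ
  rw [isPath_iff]
  constructor
  · intro h
    simp only [List.length_drop] at h
    rw [List.getElem_drop]
    cases d with
    | zero =>
      have hnil : δ.2 = [] := by simpa using h2
      have hsrc : Γ.src δ = δ.1 := by simp [SSGraph.src, hnil]
      rw [hsrc, h1]
      simpa using hβ'.1 (by omega)
    | succ d' =>
      have hlast : Γ.src δ = Γ.d (β.2[d']'(by omega)) := by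
        have hld : δ.2 = β.2.take d' ++ [β.2[d']'(by omega)] := by
          rw [h2, List.take_succ, List.getElem?_eq_getElem (by omega)]
          rfl
        have hg : δ.2.getLast? = some (β.2[d']'(by omega)) := by
          rw [hld]
          exact List.getLast?_concat
        unfold SSGraph.src
        rw [hg]
      rw [hlast]
      simpa using (hβ'.2 d' (by omega)).symm
  · intro i h
    simp only [List.length_drop] at h
    rw [List.getElem_drop, List.getElem_drop]
    exact hβ'.2 (d + i) (by omega)

lemma comp_length (α x : Pth V E) :
    (SSGraph.comp α x).2.length = α.2.length + x.2.length := by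
  simp [SSGraph.comp]

lemma sge_prod_delta {Γ : SSGraph V E} {GA : GraphAction G Γ} {c : EdgeCocycle GA}
    (S : PathSystem c)
    {α : Pth V E} {g : G} {β : Pth V E} {ξ : ℕ → E} {δ : Pth V E}
    (hβ : Γ.IsPath β) (hξ : Γ.InfPath ξ)
    (hsrc : Γ.src β = Γ.r (ξ 0)) (hδ : Γ.IsPath δ)
    (hcyl : Γ.InCyl δ (compInf β ξ)) :
    sgeMul S (some (α, g, β)) (some (δ, 1, δ)) =
      if β.2.length ≤ δ.2.length then
        some (SSGraph.comp α (S.act g (Γ.trunc ξ (δ.2.length - β.2.length))),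
          S.coc g (Γ.trunc ξ (δ.2.length - β.2.length)) * 1, δ)
      else some (α, g, β) := by
  have hβi : ∀ (i : ℕ) (h : i < β.2.length), β.2[i] = compInf β ξ i :=
    fun i h => (compInf_lt β ξ h).symm
  have hδi : ∀ (i : ℕ) (h : i < δ.2.length), δ.2[i] = compInf β ξ i :=
    fun i h => (hcyl.2 i h).symm
  have hβ1 : β.1 = Γ.r (compInf β ξ 0) := by
    rcases Nat.eq_zero_or_pos β.2.length with hb | hb
    · have hβnil : β.2 = [] := List.length_eq_zero_iff.mp hb
      have h0 : compInf β ξ 0 = ξ 0 := by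
        rw [compInf_ge β ξ (by omega)]
        congr 1
        omega
      rw [h0, ← hsrc]
      simp [SSGraph.src, hβnil]
    · rw [compInf_lt β ξ hb]
      exact (((isPath_iff Γ β.1 β.2).mp hβ).1 hb).symm
  have hv : β.1 = δ.1 := hβ1.trans hcyl.1
  by_cases hbd : β.2.length ≤ δ.2.length
  · rw [if_pos hbd]
    have hpre : β.2 <+: δ.2 := by
      have htk : β.2 = δ.2.take β.2.length := by
        refine List.ext_getElem (by rw [List.length_take]; omega) (fun i h1 h2 => ?_)
        rw [List.getElem_take, hβi i h1, hδi i (by omega)]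
      rw [htk]
      exact List.take_prefix _ _
    show sgeMulAux S (α, g, β) (δ, 1, δ) = _
    unfold sgeMulAux
    rw [if_pos ⟨hv, hpre⟩]
    show some (SSGraph.comp α (S.act g (Γ.src β, δ.2.drop β.2.length)),
        S.coc g (Γ.src β, δ.2.drop β.2.length) * 1, δ) = _
    have hε : ((Γ.src β, δ.2.drop β.2.length) : Pth V E) =
        Γ.trunc ξ (δ.2.length - β.2.length) := by
      refine Prod.ext hsrc ?_
      show δ.2.drop β.2.length = (List.range (δ.2.length - β.2.length)).map ξ
      refine List.ext_getElem (by simp) (fun i h1 h2 => ?_)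
      simp only [List.length_drop] at h1
      rw [List.getElem_drop, hδi (β.2.length + i) (by omega),
        compInf_ge β ξ (by omega)]
      simp only [List.getElem_map, List.getElem_range]
      congr 1
      omega
    rw [hε]
  · rw [if_neg hbd]
    push_neg at hbd
    have htake : δ.2 = β.2.take δ.2.length := by
      refine List.ext_getElem (by rw [List.length_take]; omega) (fun i h1 h2 => ?_)
      rw [List.getElem_take, hδi i h1, hβi i (by omega)]
    have hnA : ¬(β.1 = δ.1 ∧ β.2 <+: δ.2) := by
      rintro ⟨-, hp⟩
      have := hp.length_le
      omega
    have hpre : δ.2 <+: β.2 := by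
      rw [htake]
      exact List.take_prefix _ _
    show sgeMulAux S (α, g, β) (δ, 1, δ) = _
    unfold sgeMulAux
    rw [if_neg hnA, if_pos ⟨hv.symm, hpre⟩]
    show some (α, g * (S.coc 1⁻¹ (Γ.src δ, β.2.drop δ.2.length))⁻¹,
        SSGraph.comp δ (S.act 1⁻¹ (Γ.src δ, β.2.drop δ.2.length))) = _
    have hεP : Γ.IsPath (Γ.src δ, β.2.drop δ.2.length) :=
      isPath_drop hβ (by omega) hv.symm htake
    have hcomp : SSGraph.comp δ ((Γ.src δ, β.2.drop δ.2.length) : Pth V E) = β := by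
      unfold SSGraph.comp
      have h2 : δ.2 ++ β.2.drop δ.2.length = β.2 := by
        nth_rewrite 1 [htake]
        exact List.take_append_drop _ _
      show (δ.1, δ.2 ++ β.2.drop δ.2.length) = β
      rw [h2, ← hv]
    rw [inv_one, coc_one S hεP, S.act_one _ hεP, hcomp]
    simp

end AuxLemmas
open SSGraph in
theorem lag_well_defined_and_multiplicative {V E G : Type*} [Group G] [Countable G] [Fintype V] [Fintype E]
    (Γ : SSGraph V E) (hns : ∀ v : V, ∃ e, Γ.r e = v)
    (GA : SSGraph.GraphAction G Γ) (c : SSGraph.EdgeCocycle GA)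
    (S : PathSystem c) (hpf : PseudoFree GA c) (IA : InfAction S) :
    (∀ (α₁ : Pth V E) (g₁ : G) (β₁ : Pth V E) (ξ₁ : ℕ → E)
       (α₂ : Pth V E) (g₂ : G) (β₂ : Pth V E) (ξ₂ : ℕ → E),
      SgeCond Γ GA (α₁, g₁, β₁) → SgeCond Γ GA (α₂, g₂, β₂) →
      Γ.InfPath ξ₁ → Γ.InfPath ξ₂ →
      Γ.src β₁ = Γ.r (ξ₁ 0) → Γ.src β₂ = Γ.r (ξ₂ 0) →
      germEqv S α₁ g₁ β₁ (compInf β₁ ξ₁) α₂ g₂ β₂ (compInf β₂ ξ₂) →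
        QuotientGroup.mk' (eventuallyTrivial G)
            ((⇑(rshift G))^[α₁.2.length] (Phi S g₁ ξ₁)) =
          QuotientGroup.mk' (eventuallyTrivial G)
            ((⇑(rshift G))^[α₂.2.length] (Phi S g₂ ξ₂)) ∧
        (α₁.2.length : ℤ) - β₁.2.length = (α₂.2.length : ℤ) - β₂.2.length) ∧
    (∀ (α₁ : Pth V E) (g₁ : G) (α₂ : Pth V E) (g₂ : G) (β : Pth V E) (ξ : ℕ → E),
      SgeCond Γ GA (α₁, g₁, α₂) → SgeCond Γ GA (α₂, g₂, β) →
      Γ.InfPath ξ → Γ.src β = Γ.r (ξ 0) →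
        QuotientGroup.mk' (eventuallyTrivial G)
            ((⇑(rshift G))^[α₁.2.length] (Phi S (g₁ * g₂) ξ)) =
          QuotientGroup.mk' (eventuallyTrivial G)
              ((⇑(rshift G))^[α₁.2.length] (Phi S g₁ (IA.a g₂ ξ))) *
            coronaRhoZ G ((α₁.2.length : ℤ) - α₂.2.length)
              (QuotientGroup.mk' (eventuallyTrivial G)
                ((⇑(rshift G))^[α₂.2.length] (Phi S g₂ ξ))) ∧
        ((α₁.2.length : ℤ) - β.2.length) =
          ((α₁.2.length : ℤ) - α₂.2.length) + ((α₂.2.length : ℤ) - β.2.length)) := by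
  constructor
  · rintro α₁ g₁ β₁ ξ₁ α₂ g₂ β₂ ξ₂ hc₁ hc₂ hi₁ hi₂ hs₁ hs₂ ⟨hη, δ, hδP, hδcyl, heq⟩
    have hδcyl₂ : Γ.InCyl δ (compInf β₂ ξ₂) := hη ▸ hδcyl
    rw [sge_prod_delta S hc₁.2.1 hi₁ hs₁ hδP hδcyl,
        sge_prod_delta S hc₂.2.1 hi₂ hs₂ hδP hδcyl₂] at heq
    by_cases h1 : β₁.2.length ≤ δ.2.length <;> by_cases h2 : β₂.2.length ≤ δ.2.length
    · rw [if_pos h1, if_pos h2] at heq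
      simp only [Option.some.injEq, Prod.mk.injEq, mul_one] at heq
      obtain ⟨hA, hG, -⟩ := heq
      have hT₁ := isPath_trunc Γ hi₁ (δ.2.length - β₁.2.length)
      have hT₂ := isPath_trunc Γ hi₂ (δ.2.length - β₂.2.length)
      have hlen : α₁.2.length + (δ.2.length - β₁.2.length) =
          α₂.2.length + (δ.2.length - β₂.2.length) := by
        have hl := congrArg (fun p : Pth V E => p.2.length) hA
        simp only [comp_length] at hl
        rwa [S.length_act g₁ _ hT₁, S.length_act g₂ _ hT₂, trunc_length, trunc_length] at hl
      refine ⟨?_, by omega⟩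
      rw [mk'_eq_iff]
      refine ⟨α₁.2.length + α₂.2.length + δ.2.length, fun n hn => ?_⟩
      rw [rshift_iterate, rshift_iterate, if_neg (by omega), if_neg (by omega)]
      show S.coc g₁ (Γ.trunc ξ₁ (n - α₁.2.length)) = S.coc g₂ (Γ.trunc ξ₂ (n - α₂.2.length))
      obtain ⟨k, hk⟩ : ∃ k, n - α₁.2.length = (δ.2.length - β₁.2.length) + k :=
        ⟨n - α₁.2.length - (δ.2.length - β₁.2.length), by omega⟩
      have hk2 : n - α₂.2.length = (δ.2.length - β₂.2.length) + k := by omega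
      rw [hk, hk2, trunc_add, trunc_add]
      have hfun : (fun i => ξ₁ (δ.2.length - β₁.2.length + i)) =
          fun i => ξ₂ (δ.2.length - β₂.2.length + i) := by
        funext i
        have e1 : compInf β₁ ξ₁ (δ.2.length + i) = ξ₁ (δ.2.length + i - β₁.2.length) :=
          compInf_ge _ _ (by omega)
        have e2 : compInf β₂ ξ₂ (δ.2.length + i) = ξ₂ (δ.2.length + i - β₂.2.length) :=
          compInf_ge _ _ (by omega)
        rw [hη] at e1
        have e3 := e1.symm.trans e2
        rw [show δ.2.length + i - β₁.2.length = δ.2.length - β₁.2.length + i by omega,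
          show δ.2.length + i - β₂.2.length = δ.2.length - β₂.2.length + i by omega] at e3
        exact e3
      rw [S.coc_comp g₁ _ _ hT₁ (isPath_trunc Γ (infPath_shift Γ hi₁ _) k)
          (by rw [src_trunc Γ hi₁]; rfl),
        S.coc_comp g₂ _ _ hT₂ (isPath_trunc Γ (infPath_shift Γ hi₂ _) k)
          (by rw [src_trunc Γ hi₂]; rfl), hG, hfun]
    · rw [if_pos h1, if_neg h2] at heq
      exfalso
      simp only [Option.some.injEq, Prod.mk.injEq, mul_one] at heq
      have hl := congrArg (fun p : Pth V E => p.2.length) heq.2.2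
      omega
    · rw [if_neg h1, if_pos h2] at heq
      exfalso
      simp only [Option.some.injEq, Prod.mk.injEq, mul_one] at heq
      have hl := congrArg (fun p : Pth V E => p.2.length) heq.2.2
      omega
    · rw [if_neg h1, if_neg h2] at heq
      simp only [Option.some.injEq, Prod.mk.injEq] at heq
      obtain ⟨hα, hg, hβ⟩ := heq
      subst hα hg hβ
      have hξ : ξ₁ = ξ₂ := by
        funext n
        have e1 : compInf β₁ ξ₁ (β₁.2.length + n) = ξ₁ (β₁.2.length + n - β₁.2.length) :=
          compInf_ge _ _ (by omega)
        have e2 : compInf β₁ ξ₂ (β₁.2.length + n) = ξ₂ (β₁.2.length + n - β₁.2.length) :=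
          compInf_ge _ _ (by omega)
        rw [hη] at e1
        have e3 := e1.symm.trans e2
        rwa [show β₁.2.length + n - β₁.2.length = n by omega] at e3
      subst hξ
      exact ⟨rfl, rfl⟩
  · rintro α₁ g₁ α₂ g₂ β ξ h₁ h₂ hξ hs
    refine ⟨?_, by ring⟩
    have hPhi : Phi S (g₁ * g₂) ξ = Phi S g₁ (IA.a g₂ ξ) * Phi S g₂ ξ := by
      funext n
      show S.coc (g₁ * g₂) (Γ.trunc ξ n) =
        S.coc g₁ (Γ.trunc (IA.a g₂ ξ) n) * S.coc g₂ (Γ.trunc ξ n)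
      rw [IA.trunc_a g₂ ξ n hξ]
      exact S.coc_mul g₁ g₂ _ (isPath_trunc Γ hξ n)
    rw [hPhi, rshift_iterate_mul, map_mul, coronaRhoZ_shift]
end
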